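/- arXiv:1508.05217 — 3 statements merged into one kernel-verified Lean document; each statement's English description precedes it below -/
import Mathlib

section
/- Define the finite-horizon value recursion P(N) = Q, P(k) = M + Σ_i π_i A_i' P(k+1) A_i − Ā' P(k+1) B (R + B' P(k+1) B)⁻¹ B' P(k+1) Ā for k = N−1,…,0, with Q, M symmetric PSD and R symmetric PD. Then every P(k) is symmetric positive semidefinite. -/
open Matrix

lemma psd_smul {n : Type*} [Fintype n] {c : ℝ} (hc : 0 ≤ c) {P : Matrix n n ℝ}
    (hP : P.PosSemidef) : (c • P).PosSemidef := by
  constructor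
  · unfold Matrix.IsHermitian at *
    rw [conjTranspose_smul, hP.1.eq]
    simp
  · intro x
    exact (hP.smul hc).2 x

lemma psd_conj {n k : Type*} [Fintype n] [Fintype k] {P : Matrix n n ℝ} (hP : P.PosSemidef)
    (C : Matrix n k ℝ) : (Cᵀ * P * C).PosSemidef := by
  have := hP.conjTranspose_mul_mul_same C
  rwa [conjTranspose_eq_transpose_of_trivial] at this

lemma psd_sum {n : Type*} [Fintype n] {q : ℕ} (f : Fin q → Matrix n n ℝ)
    (hf : ∀ i, (f i).PosSemidef) : (∑ i, f i).PosSemidef := by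
  induction (Finset.univ : Finset (Fin q)) using Finset.induction with
  | empty => simpa using Matrix.PosSemidef.zero
  | insert _ _ h ih => rw [Finset.sum_insert h]; exact (hf _).add ih

/-- The one-step lemma. -/
lemma one_step {n m q : ℕ} (π : Fin q → ℝ) (hπ : ∀ i, 0 ≤ π i) (hsum : ∑ i, π i = 1)
    (A : Fin q → Matrix (Fin n) (Fin n) ℝ) (B : Matrix (Fin n) (Fin m) ℝ)
    (M : Matrix (Fin n) (Fin n) ℝ) (R : Matrix (Fin m) (Fin m) ℝ)
    (hM : M.PosSemidef) (hR : R.PosDef)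
    (P : Matrix (Fin n) (Fin n) ℝ) (hP : P.PosSemidef) :
    (M + (∑ i, π i • ((A i)ᵀ * P * A i)) -
      (∑ i, π i • A i)ᵀ * P * B * (R + Bᵀ * P * B)⁻¹ *
        Bᵀ * P * (∑ i, π i • A i)).PosSemidef := by
  set Ab := ∑ i, π i • A i with hAb
  set S := R + Bᵀ * P * B with hS
  have hSpd : S.PosDef := hR.add_posSemidef (psd_conj hP B)
  haveI : Invertible S := hSpd.isUnit.invertible
  -- the big block matrix
  set W : Matrix (Fin m ⊕ Fin n) (Fin m ⊕ Fin n) ℝ :=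
    fromBlocks S (Bᵀ * P * Ab) (Abᵀ * P * B) (∑ i, π i • ((A i)ᵀ * P * A i)) with hW
  have hterm : ∀ i : Fin q, (fromCols B (A i))ᵀ * P * (fromCols B (A i)) =
      fromBlocks (Bᵀ * P * B) (Bᵀ * P * A i) ((A i)ᵀ * P * B) ((A i)ᵀ * P * A i) := by
    intro i
    rw [transpose_fromCols, fromRows_mul, fromRows_mul_fromCols]
  have sum_fb : ∑ i, π i • ((fromCols B (A i))ᵀ * P * (fromCols B (A i))) =
      fromBlocks (∑ i, π i • (Bᵀ * P * B)) (∑ i, π i • (Bᵀ * P * A i))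
        (∑ i, π i • ((A i)ᵀ * P * B)) (∑ i, π i • ((A i)ᵀ * P * A i)) := by
    simp_rw [hterm, fromBlocks_smul]
    ext (i | i) (j | j) <;> simp [Matrix.sum_apply]
  have e11 : (∑ i : Fin q, π i • (Bᵀ * P * B)) + R = S := by
    rw [← Finset.sum_smul, hsum, one_smul, hS, add_comm]
  have e12 : Bᵀ * P * Ab = ∑ i, π i • (Bᵀ * P * A i) := by
    rw [hAb, Matrix.mul_sum]
    simp_rw [Matrix.mul_smul]
  have e21 : Abᵀ * P * B = ∑ i, π i • ((A i)ᵀ * P * B) := by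
    rw [hAb, transpose_sum]
    simp_rw [transpose_smul, Matrix.sum_mul, Matrix.smul_mul]
  have hWeq : W = (∑ i, π i • ((fromCols B (A i))ᵀ * P * (fromCols B (A i)))) +
      fromBlocks R 0 0 0 := by
    rw [hW, sum_fb, fromBlocks_add, add_zero, add_zero, add_zero, e12, e21, ← e11]
  have hWpsd : W.PosSemidef := by
    rw [hWeq]
    refine (psd_sum _ fun i => psd_smul (hπ i) (psd_conj hP _)).add ?_
    -- fromBlocks R 0 0 0 is PSD
    have : (fromBlocks R 0 0 0 : Matrix (Fin m ⊕ Fin n) (Fin m ⊕ Fin n) ℝ) =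
        (fromCols (1 : Matrix (Fin m) (Fin m) ℝ) (0 : Matrix (Fin m) (Fin n) ℝ))ᵀ * R *
          fromCols (1 : Matrix (Fin m) (Fin m) ℝ) (0 : Matrix (Fin m) (Fin n) ℝ) := by
      rw [transpose_fromCols, fromRows_mul, fromRows_mul_fromCols]
      simp
    rw [this]
    exact psd_conj hR.posSemidef _
  -- Schur complement
  have hPt : Pᵀ = P := by
    rw [← conjTranspose_eq_transpose_of_trivial]; exact hP.1
  have hherm : (Bᵀ * P * Ab)ᴴ = Abᵀ * P * B := by
    rw [conjTranspose_eq_transpose_of_trivial, transpose_mul, transpose_mul,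
      transpose_transpose, hPt, ← Matrix.mul_assoc]
  have hschur := (PosDef.fromBlocks₁₁ (Bᵀ * P * Ab)
    (∑ i, π i • ((A i)ᵀ * P * A i)) hSpd).mp (by rw [hherm]; exact hWpsd)
  rw [hherm] at hschur
  have hgoal : M + (∑ i, π i • ((A i)ᵀ * P * A i)) -
      Abᵀ * P * B * S⁻¹ * Bᵀ * P * Ab =
      M + ((∑ i, π i • ((A i)ᵀ * P * A i)) - Abᵀ * P * B * S⁻¹ * (Bᵀ * P * Ab)) := by
    rw [add_sub_assoc]
    congr 2
    simp [Matrix.mul_assoc]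
  rw [hgoal]
  exact hM.add hschur

/-- Every matrix of the backward finite-horizon Riccati recursion
`P(N)=Q`, `P(k) = M + Σ_i π_i A_i'P(k+1)A_i − Ā'P(k+1)B(R+B'P(k+1)B)⁻¹B'P(k+1)Ā`
is symmetric positive semidefinite. -/
theorem stmt7 {n m q : ℕ} (π : Fin q → ℝ) (hπ : ∀ i, 0 ≤ π i) (hsum : ∑ i, π i = 1)
    (A : Fin q → Matrix (Fin n) (Fin n) ℝ) (B : Matrix (Fin n) (Fin m) ℝ)
    (M Q : Matrix (Fin n) (Fin n) ℝ) (R : Matrix (Fin m) (Fin m) ℝ)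
    (hM : M.PosSemidef) (hQ : Q.PosSemidef) (hR : R.PosDef)
    (N : ℕ) (Pm : ℕ → Matrix (Fin n) (Fin n) ℝ)
    (hPN : Pm N = Q)
    (hrec : ∀ k, k < N → Pm k = M + (∑ i, π i • ((A i)ᵀ * Pm (k+1) * A i)) -
      (∑ i, π i • A i)ᵀ * Pm (k+1) * B * (R + Bᵀ * Pm (k+1) * B)⁻¹ *
        Bᵀ * Pm (k+1) * (∑ i, π i • A i)) :
    ∀ k, k ≤ N → (Pm k).PosSemidef := by
  have key : ∀ d : ℕ, d ≤ N → (Pm (N - d)).PosSemidef := by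
    intro d
    induction d with
    | zero => intro _; simpa [hPN] using hQ
    | succ d ih =>
      intro hd
      have hdN : d ≤ N := Nat.le_of_succ_le hd
      have hlt : N - (d + 1) < N := by omega
      have hsucc : N - (d + 1) + 1 = N - d := by omega
      rw [hrec _ hlt, hsucc]
      exact one_step π hπ hsum A B M R hM hR _ (ih hdN)
  intro k hk
  have h1 : N - (N - k) = k := by omega
  rw [← h1]
  exact key (N - k) (Nat.sub_le _ _)
end

section
/- Consider the dtMJLS x(k+1) = A_{σ(k)} x(k) + B u(k) with (σ(k)) i.i.d. with distribution π, and the cost J = E[Σ_{k=0}^{N−1} (x(k)'Mx(k) + u(k)'Ru(k)) + x(N)'Qx(N)] over causal (state-feedback) policies u(k) = g_k(x(0),…,x(k)). Then the optimal cost from initial state x(0) = x₀ is x₀' P(0) x₀, where P(·) satisfies the backward Riccati-type recursion P(N)=Q, P(k) = M + Σ_i π_i A_i'P(k+1)A_i − Ā'P(k+1)B(R+B'P(k+1)B)⁻¹B'P(k+1)Ā, and an optimal policy is the linear feedback u(k) = K(k)x(k) with K(k) = −(R + B'P(k+1)B)⁻¹ B' P(k+1) Ā. -/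
open Matrix

/-- The (random) state trajectory of the jump linear system
`x(k+1) = A_{σ(k)} x(k) + B u(k)` under a causal state-feedback policy `g`
(at time `k`, `g k` is applied to the state history `x(0),…,x(k)`);
`trajs A B g x0 ω k` is the history `(x(0),…,x(k))` for the noise realization `ω`. -/
noncomputable def trajs {n m q : ℕ} (A : Fin q → Matrix (Fin n) (Fin n) ℝ)
    (B : Matrix (Fin n) (Fin m) ℝ)
    (g : (k : ℕ) → (Fin (k + 1) → (Fin n → ℝ)) → (Fin m → ℝ))
    (x0 : Fin n → ℝ) (ω : ℕ → Fin q) : (k : ℕ) → Fin (k + 1) → (Fin n → ℝ)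
  | 0 => fun _ => x0
  | k + 1 => Fin.snoc (trajs A B g x0 ω k)
      (A (ω k) *ᵥ (trajs A B g x0 ω k (Fin.last k)) + B *ᵥ g k (trajs A B g x0 ω k))

/-- Expected finite-horizon LQR cost
`E[Σ_{k=0}^{N−1} (x(k)'Mx(k) + u(k)'Ru(k)) + x(N)'Qx(N)]` of the policy `g`,
the expectation taken over the i.i.d. sequence `σ(0),…,σ(N−1)` with distribution `π`. -/
noncomputable def expCost {n m q : ℕ} [NeZero q]
    (A : Fin q → Matrix (Fin n) (Fin n) ℝ) (B : Matrix (Fin n) (Fin m) ℝ)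
    (M Q : Matrix (Fin n) (Fin n) ℝ) (R : Matrix (Fin m) (Fin m) ℝ)
    (π : Fin q → ℝ) (N : ℕ) (x0 : Fin n → ℝ)
    (g : (k : ℕ) → (Fin (k + 1) → (Fin n → ℝ)) → (Fin m → ℝ)) : ℝ :=
  ∑ ω : Fin N → Fin q, (∏ k, π (ω k)) *
    (let ωe : ℕ → Fin q := fun k => if h : k < N then ω ⟨k, h⟩ else default
     (∑ k ∈ Finset.range N,
        ((trajs A B g x0 ωe k (Fin.last k)) ⬝ᵥ (M *ᵥ (trajs A B g x0 ωe k (Fin.last k))) +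
         (g k (trajs A B g x0 ωe k)) ⬝ᵥ (R *ᵥ (g k (trajs A B g x0 ωe k))))) +
     (trajs A B g x0 ωe N (Fin.last N)) ⬝ᵥ (Q *ᵥ (trajs A B g x0 ωe N (Fin.last N))))

section helpers
variable {ι α β : Type} [Fintype α] [Fintype β] [DecidableEq α]

lemma mulVec_sum' {s : Finset ι} (C : ι → Matrix α β ℝ) (v : β → ℝ) :
    (∑ i ∈ s, C i) *ᵥ v = ∑ i ∈ s, C i *ᵥ v := by
  ext j
  simp only [Matrix.mulVec, dotProduct, Matrix.sum_apply, Finset.sum_apply,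
    Finset.sum_mul]
  exact Finset.sum_comm

lemma dotProduct_sum' {s : Finset ι} (v : α → ℝ) (w : ι → α → ℝ) :
    v ⬝ᵥ (∑ i ∈ s, w i) = ∑ i ∈ s, v ⬝ᵥ w i := by
  simp only [dotProduct, Finset.sum_apply, Finset.mul_sum]
  exact Finset.sum_comm

lemma dotTrans (E : Matrix α β ℝ) (v : β → ℝ) (w : α → ℝ) :
    (E *ᵥ v) ⬝ᵥ w = v ⬝ᵥ (Eᵀ *ᵥ w) := by
  rw [dotProduct_comm, dotProduct_mulVec, mulVec_transpose, dotProduct_comm]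

lemma dotTrans2 (E : Matrix α β ℝ) (v : β → ℝ) (w : α → ℝ) :
    w ⬝ᵥ (E *ᵥ v) = v ⬝ᵥ (Eᵀ *ᵥ w) := by
  rw [dotProduct_comm, dotTrans]

lemma psd_nonneg {P : Matrix α α ℝ} (h : P.PosSemidef) (x : α → ℝ) :
    0 ≤ x ⬝ᵥ (P *ᵥ x) := by simpa using h.dotProduct_mulVec_nonneg x

end helpers

set_option maxHeartbeats 1000000 in
lemma key_quad {n m q : ℕ} [NeZero q] (π : Fin q → ℝ) (hsum : ∑ i, π i = 1)
    (A : Fin q → Matrix (Fin n) (Fin n) ℝ) (B : Matrix (Fin n) (Fin m) ℝ)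
    (M : Matrix (Fin n) (Fin n) ℝ) (R : Matrix (Fin m) (Fin m) ℝ)
    (P P0 : Matrix (Fin n) (Fin n) ℝ) (hPsym : Pᵀ = P)
    (hSpd : (R + Bᵀ * P * B).PosDef)
    (hrec : P0 = M + (∑ i, π i • ((A i)ᵀ * P * A i)) -
      (∑ i, π i • A i)ᵀ * P * B * (R + Bᵀ * P * B)⁻¹ * Bᵀ * P * (∑ i, π i • A i))
    (x : Fin n → ℝ) (u : Fin m → ℝ) :
    x ⬝ᵥ (M *ᵥ x) + u ⬝ᵥ (R *ᵥ u) +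
      ∑ i, π i * ((A i *ᵥ x + B *ᵥ u) ⬝ᵥ (P *ᵥ (A i *ᵥ x + B *ᵥ u)))
    = x ⬝ᵥ (P0 *ᵥ x) +
      (u + ((R + Bᵀ * P * B)⁻¹ * Bᵀ * P * (∑ i, π i • A i)) *ᵥ x) ⬝ᵥ
        ((R + Bᵀ * P * B) *ᵥ (u + ((R + Bᵀ * P * B)⁻¹ * Bᵀ * P * (∑ i, π i • A i)) *ᵥ x)) := by
  have hSsym : (R + Bᵀ * P * B)ᵀ = R + Bᵀ * P * B := by
    have := hSpd.isHermitian
    rwa [Matrix.IsHermitian, conjTranspose_eq_transpose_of_trivial] at this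
  have hSu : IsUnit (R + Bᵀ * P * B).det :=
    (Matrix.isUnit_iff_isUnit_det _).mp hSpd.isUnit
  set S := R + Bᵀ * P * B with hSdef
  set Ab := ∑ i, π i • A i with hAbdef
  have hSS : S * S⁻¹ = 1 := Matrix.mul_nonsing_inv S hSu
  have hSS' : S⁻¹ * S = 1 := Matrix.nonsing_inv_mul S hSu
  have hSinvsym : (S⁻¹)ᵀ = S⁻¹ := by rw [Matrix.transpose_nonsing_inv, hSsym]
  have hAbT : Abᵀ = ∑ i, π i • (A i)ᵀ := by
    rw [hAbdef, Matrix.transpose_sum]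
    simp [Matrix.transpose_smul]
  -- expansion of each quadratic term
  have expand : ∀ i, (A i *ᵥ x + B *ᵥ u) ⬝ᵥ (P *ᵥ (A i *ᵥ x + B *ᵥ u))
      = x ⬝ᵥ (((A i)ᵀ * (P * A i)) *ᵥ x) + 2 * (x ⬝ᵥ (((A i)ᵀ * (P * B)) *ᵥ u)) +
        u ⬝ᵥ ((Bᵀ * (P * B)) *ᵥ u) := by
    intro i
    have h3 : (B *ᵥ u) ⬝ᵥ (P *ᵥ (A i *ᵥ x)) = x ⬝ᵥ (((A i)ᵀ * (P * B)) *ᵥ u) := by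
      rw [dotTrans, mulVec_mulVec, mulVec_mulVec, dotTrans2, Matrix.transpose_mul,
        Matrix.transpose_mul, transpose_transpose, hPsym]
    simp only [mulVec_add, dotProduct_add, add_dotProduct]
    rw [h3]
    simp only [dotTrans, mulVec_mulVec]
    ring
  simp only [Matrix.mul_assoc] at hrec
  have e1 : ∑ i, π i * (x ⬝ᵥ (((A i)ᵀ * (P * A i)) *ᵥ x))
      = x ⬝ᵥ ((∑ i, π i • ((A i)ᵀ * (P * A i))) *ᵥ x) := by
    rw [mulVec_sum', dotProduct_sum']
    apply Finset.sum_congr rfl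
    intro i _
    rw [smul_mulVec, dotProduct_smul, smul_eq_mul]
  have e2 : ∑ i, π i * (x ⬝ᵥ (((A i)ᵀ * (P * B)) *ᵥ u))
      = x ⬝ᵥ ((Abᵀ * (P * B)) *ᵥ u) := by
    rw [hAbT, Matrix.sum_mul, mulVec_sum', dotProduct_sum']
    apply Finset.sum_congr rfl
    intro i _
    rw [Matrix.smul_mul, smul_mulVec, dotProduct_smul, smul_eq_mul]
  have esum : ∑ i, π i * ((A i *ᵥ x + B *ᵥ u) ⬝ᵥ (P *ᵥ (A i *ᵥ x + B *ᵥ u)))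
      = x ⬝ᵥ ((∑ i, π i • ((A i)ᵀ * (P * A i))) *ᵥ x)
        + 2 * (x ⬝ᵥ ((Abᵀ * (P * B)) *ᵥ u))
        + u ⬝ᵥ ((Bᵀ * (P * B)) *ᵥ u) := by
    calc ∑ i, π i * ((A i *ᵥ x + B *ᵥ u) ⬝ᵥ (P *ᵥ (A i *ᵥ x + B *ᵥ u)))
        = ∑ i, (π i * (x ⬝ᵥ (((A i)ᵀ * (P * A i)) *ᵥ x))
            + 2 * (π i * (x ⬝ᵥ (((A i)ᵀ * (P * B)) *ᵥ u)))
            + π i * (u ⬝ᵥ ((Bᵀ * (P * B)) *ᵥ u))) := by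
          apply Finset.sum_congr rfl
          intro i _
          rw [expand i]; ring
      _ = (∑ i, π i * (x ⬝ᵥ (((A i)ᵀ * (P * A i)) *ᵥ x)))
            + 2 * (∑ i, π i * (x ⬝ᵥ (((A i)ᵀ * (P * B)) *ᵥ u)))
            + (∑ i, π i) * (u ⬝ᵥ ((Bᵀ * (P * B)) *ᵥ u)) := by
          rw [Finset.sum_add_distrib, Finset.sum_add_distrib, ← Finset.mul_sum,
            ← Finset.sum_mul]
      _ = _ := by rw [e1, e2, hsum, one_mul]
  have f1 : S * (S⁻¹ * Bᵀ * P * Ab) = Bᵀ * (P * Ab) := by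
    simp only [Matrix.mul_assoc]
    rw [← Matrix.mul_assoc S S⁻¹, hSS, Matrix.one_mul]
  have hT2 : (S⁻¹ * Bᵀ * P * Ab)ᵀ * S = Abᵀ * (P * B) := by
    simp only [Matrix.transpose_mul, transpose_transpose, hPsym, hSinvsym, Matrix.mul_assoc,
      hSS', Matrix.mul_one]
  have hT3 : (S⁻¹ * Bᵀ * P * Ab)ᵀ * (Bᵀ * (P * Ab))
      = Abᵀ * (P * (B * (S⁻¹ * (Bᵀ * (P * Ab))))) := by
    simp only [Matrix.transpose_mul, transpose_transpose, hPsym, hSinvsym, Matrix.mul_assoc]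
  have hT1 : (Bᵀ * (P * Ab))ᵀ = Abᵀ * (P * B) := by
    simp only [Matrix.transpose_mul, transpose_transpose, hPsym, Matrix.mul_assoc]
  have erhs : (u + (S⁻¹ * Bᵀ * P * Ab) *ᵥ x) ⬝ᵥ (S *ᵥ (u + (S⁻¹ * Bᵀ * P * Ab) *ᵥ x))
      = u ⬝ᵥ (R *ᵥ u) + u ⬝ᵥ ((Bᵀ * (P * B)) *ᵥ u)
        + 2 * (x ⬝ᵥ ((Abᵀ * (P * B)) *ᵥ u))
        + x ⬝ᵥ ((Abᵀ * (P * (B * (S⁻¹ * (Bᵀ * (P * Ab)))))) *ᵥ x) := by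
    have g2 : u ⬝ᵥ (S *ᵥ ((S⁻¹ * Bᵀ * P * Ab) *ᵥ x)) = x ⬝ᵥ ((Abᵀ * (P * B)) *ᵥ u) := by
      rw [mulVec_mulVec, f1, dotTrans2, hT1]
    have g3 : ((S⁻¹ * Bᵀ * P * Ab) *ᵥ x) ⬝ᵥ (S *ᵥ u) = x ⬝ᵥ ((Abᵀ * (P * B)) *ᵥ u) := by
      rw [dotTrans, mulVec_mulVec, hT2]
    have g4 : ((S⁻¹ * Bᵀ * P * Ab) *ᵥ x) ⬝ᵥ (S *ᵥ ((S⁻¹ * Bᵀ * P * Ab) *ᵥ x))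
        = x ⬝ᵥ ((Abᵀ * (P * (B * (S⁻¹ * (Bᵀ * (P * Ab)))))) *ᵥ x) := by
      rw [mulVec_mulVec, f1, dotTrans, mulVec_mulVec, hT3]
    have gS : u ⬝ᵥ (S *ᵥ u) = u ⬝ᵥ (R *ᵥ u) + u ⬝ᵥ ((Bᵀ * (P * B)) *ᵥ u) := by
      rw [hSdef, Matrix.add_mulVec, dotProduct_add, Matrix.mul_assoc]
    simp only [mulVec_add, dotProduct_add, add_dotProduct, g2, g3, g4, gS]
    ring
  rw [esum, hrec, erhs]
  simp only [Matrix.add_mulVec, Matrix.sub_mulVec, dotProduct_add, dotProduct_sub]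
  ring

lemma trajs_congr {n m q : ℕ} (A : Fin q → Matrix (Fin n) (Fin n) ℝ)
    (B : Matrix (Fin n) (Fin m) ℝ)
    (g : (k : ℕ) → (Fin (k + 1) → (Fin n → ℝ)) → (Fin m → ℝ)) (x0 : Fin n → ℝ)
    (ω ω' : ℕ → Fin q) : ∀ k, (∀ j, j < k → ω j = ω' j) →
    trajs A B g x0 ω k = trajs A B g x0 ω' k
  | 0, _ => rfl
  | k+1, h => by
    have ih := trajs_congr A B g x0 ω ω' k (fun j hj => h j (Nat.lt_succ_of_lt hj))
    simp only [trajs, ih, h k (Nat.lt_succ_self k)]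

lemma sum_snoc_split {q : ℕ} [NeZero q] (π : Fin q → ℝ) (N : ℕ)
    (F : (Fin (N+1) → Fin q) → ℝ) :
    ∑ ω : Fin (N+1) → Fin q, (∏ j, π (ω j)) * F ω
    = ∑ ω : Fin N → Fin q, (∏ j, π (ω j)) * ∑ i, π i * F (Fin.snoc ω i) := by
  rw [← (Fin.snocEquiv (fun _ => Fin q)).sum_comp (fun ω => (∏ j, π (ω j)) * F ω)]
  rw [Fintype.sum_prod_type]
  rw [Finset.sum_comm]
  apply Finset.sum_congr rfl
  intro ω _
  rw [Finset.mul_sum]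
  apply Finset.sum_congr rfl
  intro i _
  have he : (Fin.snocEquiv (fun _ => Fin q)) (i, ω) = Fin.snoc ω i := by
    funext j; simp [Fin.snocEquiv]
  rw [he]
  rw [Fin.prod_univ_castSucc]
  simp only [Fin.snoc_castSucc, Fin.snoc_last]
  ring

lemma marg {q : ℕ} [NeZero q] (π : Fin q → ℝ) (hsum : ∑ i, π i = 1) (N : ℕ)
    (f : (ℕ → Fin q) → ℝ)
    (hf : ∀ ω ω' : ℕ → Fin q, (∀ j, j < N → ω j = ω' j) → f ω = f ω') :
    ∑ ω : Fin (N+1) → Fin q, (∏ j, π (ω j)) *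
        f (fun j => if h : j < N+1 then ω ⟨j, h⟩ else default)
    = ∑ ω : Fin N → Fin q, (∏ j, π (ω j)) *
        f (fun j => if h : j < N then ω ⟨j, h⟩ else default) := by
  rw [sum_snoc_split]
  apply Finset.sum_congr rfl
  intro ω _
  have hfi : ∀ i : Fin q,
      f (fun j => if h : j < N+1 then (Fin.snoc ω i : Fin (N+1) → Fin q) ⟨j, h⟩ else default)
      = f (fun j => if h : j < N then ω ⟨j, h⟩ else default) := by
    intro i
    apply hf
    intro j hj
    rw [dif_pos (Nat.lt_succ_of_lt hj), dif_pos hj]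
    simp [Fin.snoc, hj]
  simp only [hfi, ← Finset.sum_mul, hsum, one_mul]

lemma sym_of_psd {k : ℕ} {P : Matrix (Fin k) (Fin k) ℝ} (h : P.PosSemidef) : Pᵀ = P := by
  have := h.isHermitian
  rwa [Matrix.IsHermitian, conjTranspose_eq_transpose_of_trivial] at this

lemma Spd {n m : ℕ} {B : Matrix (Fin n) (Fin m) ℝ} {R : Matrix (Fin m) (Fin m) ℝ}
    {P : Matrix (Fin n) (Fin n) ℝ} (hR : R.PosDef) (hP : P.PosSemidef) :
    (R + Bᵀ * P * B).PosDef := by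
  have := hP.conjTranspose_mul_mul_same B
  rw [conjTranspose_eq_transpose_of_trivial] at this
  exact hR.add_posSemidef this

lemma psd_step {n m q : ℕ} [NeZero q] (π : Fin q → ℝ) (hπ : ∀ i, 0 ≤ π i)
    (hsum : ∑ i, π i = 1)
    (A : Fin q → Matrix (Fin n) (Fin n) ℝ) (B : Matrix (Fin n) (Fin m) ℝ)
    (M : Matrix (Fin n) (Fin n) ℝ) (R : Matrix (Fin m) (Fin m) ℝ)
    (hM : M.PosSemidef) (hR : R.PosDef)
    (P P0 : Matrix (Fin n) (Fin n) ℝ) (hP : P.PosSemidef)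
    (hrec : P0 = M + (∑ i, π i • ((A i)ᵀ * P * A i)) -
      (∑ i, π i • A i)ᵀ * P * B * (R + Bᵀ * P * B)⁻¹ * Bᵀ * P * (∑ i, π i • A i)) :
    P0.PosSemidef := by
  have hPsym : Pᵀ = P := sym_of_psd hP
  have hSpd : (R + Bᵀ * P * B).PosDef := Spd hR hP
  have hSsym : (R + Bᵀ * P * B)ᵀ = R + Bᵀ * P * B := sym_of_psd hSpd.posSemidef
  have hSinvsym : ((R + Bᵀ * P * B)⁻¹)ᵀ = (R + Bᵀ * P * B)⁻¹ := by
    rw [Matrix.transpose_nonsing_inv, hSsym]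
  have hSinvsym' : ((R + Bᵀ * (P * B))⁻¹)ᵀ = (R + Bᵀ * (P * B))⁻¹ := by
    rw [← Matrix.mul_assoc]; exact hSinvsym
  apply Matrix.PosSemidef.of_dotProduct_mulVec_nonneg
  · rw [Matrix.IsHermitian, conjTranspose_eq_transpose_of_trivial, hrec]
    simp only [Matrix.transpose_sub, Matrix.transpose_add, Matrix.transpose_sum,
      Matrix.transpose_smul, Matrix.transpose_mul, transpose_transpose, hPsym,
      sym_of_psd hM, Matrix.mul_assoc, hSinvsym']
  · intro v
    have key := key_quad π hsum A B M R P P0 hPsym hSpd hrec v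
      (-(((R + Bᵀ * P * B)⁻¹ * Bᵀ * P * (∑ i, π i • A i)) *ᵥ v))
    rw [neg_add_cancel, zero_dotProduct, add_zero] at key
    have h1 : 0 ≤ v ⬝ᵥ (M *ᵥ v) := psd_nonneg hM v
    have h2 : 0 ≤ (-(((R + Bᵀ * P * B)⁻¹ * Bᵀ * P * (∑ i, π i • A i)) *ᵥ v)) ⬝ᵥ
        (R *ᵥ (-(((R + Bᵀ * P * B)⁻¹ * Bᵀ * P * (∑ i, π i • A i)) *ᵥ v))) :=
      psd_nonneg hR.posSemidef _
    have h3 : 0 ≤ ∑ i, π i * ((A i *ᵥ v + B *ᵥ (-(((R + Bᵀ * P * B)⁻¹ * Bᵀ * P *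
        (∑ i, π i • A i)) *ᵥ v))) ⬝ᵥ (P *ᵥ (A i *ᵥ v + B *ᵥ (-(((R + Bᵀ * P * B)⁻¹ * Bᵀ * P *
        (∑ i, π i • A i)) *ᵥ v))))) :=
      Finset.sum_nonneg fun i _ => mul_nonneg (hπ i) (psd_nonneg hP _)
    have : 0 ≤ v ⬝ᵥ (P0 *ᵥ v) := by rw [← key]; positivity
    simpa using this

noncomputable def extSeq {q : ℕ} [NeZero q] (N : ℕ) (ω : Fin N → Fin q) : ℕ → Fin q :=
  fun j => if h : j < N then ω ⟨j, h⟩ else default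

noncomputable def stageSum {n m q : ℕ} (A : Fin q → Matrix (Fin n) (Fin n) ℝ)
    (B : Matrix (Fin n) (Fin m) ℝ) (M : Matrix (Fin n) (Fin n) ℝ)
    (R : Matrix (Fin m) (Fin m) ℝ)
    (g : (k : ℕ) → (Fin (k + 1) → (Fin n → ℝ)) → (Fin m → ℝ)) (x0 : Fin n → ℝ)
    (N : ℕ) (ωe : ℕ → Fin q) : ℝ :=
  ∑ k ∈ Finset.range N,
    ((trajs A B g x0 ωe k (Fin.last k)) ⬝ᵥ (M *ᵥ (trajs A B g x0 ωe k (Fin.last k))) +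
     (g k (trajs A B g x0 ωe k)) ⬝ᵥ (R *ᵥ (g k (trajs A B g x0 ωe k))))

noncomputable def dterm {n m q : ℕ} (A : Fin q → Matrix (Fin n) (Fin n) ℝ)
    (B : Matrix (Fin n) (Fin m) ℝ) (R : Matrix (Fin m) (Fin m) ℝ) (π : Fin q → ℝ)
    (Pm : ℕ → Matrix (Fin n) (Fin n) ℝ)
    (g : (k : ℕ) → (Fin (k + 1) → (Fin n → ℝ)) → (Fin m → ℝ)) (x0 : Fin n → ℝ)
    (k : ℕ) (ωe : ℕ → Fin q) : ℝ :=
  (g k (trajs A B g x0 ωe k) +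
      ((R + Bᵀ * Pm (k+1) * B)⁻¹ * Bᵀ * Pm (k+1) * (∑ i, π i • A i)) *ᵥ
        (trajs A B g x0 ωe k (Fin.last k))) ⬝ᵥ
    ((R + Bᵀ * Pm (k+1) * B) *ᵥ
      (g k (trajs A B g x0 ωe k) +
        ((R + Bᵀ * Pm (k+1) * B)⁻¹ * Bᵀ * Pm (k+1) * (∑ i, π i • A i)) *ᵥ
          (trajs A B g x0 ωe k (Fin.last k))))

lemma expCost_def {n m q : ℕ} [NeZero q] (A : Fin q → Matrix (Fin n) (Fin n) ℝ)
    (B : Matrix (Fin n) (Fin m) ℝ) (M Q : Matrix (Fin n) (Fin n) ℝ)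
    (R : Matrix (Fin m) (Fin m) ℝ) (π : Fin q → ℝ) (N : ℕ) (x0 : Fin n → ℝ)
    (g : (k : ℕ) → (Fin (k + 1) → (Fin n → ℝ)) → (Fin m → ℝ)) :
    expCost A B M Q R π N x0 g = ∑ ω : Fin N → Fin q, (∏ k, π (ω k)) *
      (stageSum A B M R g x0 N (extSeq N ω) +
       (trajs A B g x0 (extSeq N ω) N (Fin.last N)) ⬝ᵥ
         (Q *ᵥ (trajs A B g x0 (extSeq N ω) N (Fin.last N)))) := rfl

lemma dterm_congr {n m q : ℕ} [NeZero q] (A : Fin q → Matrix (Fin n) (Fin n) ℝ)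
    (B : Matrix (Fin n) (Fin m) ℝ) (R : Matrix (Fin m) (Fin m) ℝ) (π : Fin q → ℝ)
    (Pm : ℕ → Matrix (Fin n) (Fin n) ℝ)
    (g : (k : ℕ) → (Fin (k + 1) → (Fin n → ℝ)) → (Fin m → ℝ)) (x0 : Fin n → ℝ)
    (k : ℕ) (ω ω' : ℕ → Fin q) (h : ∀ j, j < k → ω j = ω' j) :
    dterm A B R π Pm g x0 k ω = dterm A B R π Pm g x0 k ω' := by
  unfold dterm
  rw [trajs_congr A B g x0 ω ω' k h]

lemma extSeq_snoc_agree {q : ℕ} [NeZero q] (N : ℕ) (ω : Fin N → Fin q) (i : Fin q) :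
    ∀ j, j < N → extSeq (N+1) (Fin.snoc ω i) j = extSeq N ω j := by
  intro j hj
  unfold extSeq
  rw [dif_pos (Nat.lt_succ_of_lt hj), dif_pos hj]
  simp [Fin.snoc, hj]

lemma extSeq_snoc_last {q : ℕ} [NeZero q] (N : ℕ) (ω : Fin N → Fin q) (i : Fin q) :
    extSeq (N+1) (Fin.snoc ω i) N = i := by
  unfold extSeq
  rw [dif_pos (Nat.lt_succ_self N)]
  have : (⟨N, Nat.lt_succ_self N⟩ : Fin (N+1)) = Fin.last N := rfl
  rw [this, Fin.snoc_last]

set_option maxHeartbeats 1600000 in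
lemma mainLemma {n m q : ℕ} [NeZero q] (π : Fin q → ℝ) (hπ : ∀ i, 0 ≤ π i)
    (hsum : ∑ i, π i = 1)
    (A : Fin q → Matrix (Fin n) (Fin n) ℝ) (B : Matrix (Fin n) (Fin m) ℝ)
    (M : Matrix (Fin n) (Fin n) ℝ) (R : Matrix (Fin m) (Fin m) ℝ)
    (hR : R.PosDef)
    (Pm : ℕ → Matrix (Fin n) (Fin n) ℝ) :
    ∀ (N : ℕ), (∀ k, k < N → Pm k = M + (∑ i, π i • ((A i)ᵀ * Pm (k+1) * A i)) -
      (∑ i, π i • A i)ᵀ * Pm (k+1) * B * (R + Bᵀ * Pm (k+1) * B)⁻¹ *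
        Bᵀ * Pm (k+1) * (∑ i, π i • A i)) →
    (∀ k, k ≤ N → (Pm k).PosSemidef) →
    ∀ (x0 : Fin n → ℝ) (g : (k : ℕ) → (Fin (k + 1) → (Fin n → ℝ)) → (Fin m → ℝ)),
    expCost A B M (Pm N) R π N x0 g
      = x0 ⬝ᵥ (Pm 0 *ᵥ x0) +
        ∑ k ∈ Finset.range N, ∑ ω : Fin N → Fin q, (∏ j, π (ω j)) *
          dterm A B R π Pm g x0 k (extSeq N ω) := by
  intro N
  induction N with
  | zero =>
    intro _ _ x0 g
    rw [expCost_def]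
    simp [stageSum, trajs]
  | succ N IH =>
    intro hrec hpsd x0 g
    have hrecN : ∀ k, k < N → Pm k = M + (∑ i, π i • ((A i)ᵀ * Pm (k+1) * A i)) -
        (∑ i, π i • A i)ᵀ * Pm (k+1) * B * (R + Bᵀ * Pm (k+1) * B)⁻¹ *
          Bᵀ * Pm (k+1) * (∑ i, π i • A i) := fun k hk => hrec k (Nat.lt_succ_of_lt hk)
    have hpsdN : ∀ k, k ≤ N → (Pm k).PosSemidef := fun k hk => hpsd k (Nat.le_succ_of_le hk)
    have hPsym : (Pm (N+1))ᵀ = Pm (N+1) := sym_of_psd (hpsd (N+1) le_rfl)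
    have hSpd : (R + Bᵀ * Pm (N+1) * B).PosDef := Spd hR (hpsd (N+1) le_rfl)
    have step1 : expCost A B M (Pm (N+1)) R π (N+1) x0 g
        = expCost A B M (Pm N) R π N x0 g
          + ∑ ω : Fin N → Fin q, (∏ j, π (ω j)) *
              dterm A B R π Pm g x0 N (extSeq N ω) := by
      rw [expCost_def, sum_snoc_split]
      rw [expCost_def, ← Finset.sum_add_distrib]
      apply Finset.sum_congr rfl
      intro ω _
      rw [← mul_add]
      congr 1
      have htrajs : ∀ (i : Fin q) (k : ℕ), k ≤ N →
          trajs A B g x0 (extSeq (N+1) (Fin.snoc ω i)) k = trajs A B g x0 (extSeq N ω) k :=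
        fun i k hk => trajs_congr A B g x0 _ _ k
          (fun j hj => extSeq_snoc_agree N ω i j (lt_of_lt_of_le hj hk))
      have hstage : ∀ i : Fin q,
          stageSum A B M R g x0 (N+1) (extSeq (N+1) (Fin.snoc ω i))
          = stageSum A B M R g x0 N (extSeq N ω) +
            ((trajs A B g x0 (extSeq N ω) N (Fin.last N)) ⬝ᵥ
              (M *ᵥ (trajs A B g x0 (extSeq N ω) N (Fin.last N))) +
             (g N (trajs A B g x0 (extSeq N ω) N)) ⬝ᵥ
              (R *ᵥ (g N (trajs A B g x0 (extSeq N ω) N)))) := by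
        intro i
        unfold stageSum
        rw [Finset.sum_range_succ]
        congr 1
        · apply Finset.sum_congr rfl
          intro k hk
          rw [htrajs i k (le_of_lt (Finset.mem_range.mp hk))]
        · rw [htrajs i N le_rfl]
      have hX : ∀ i : Fin q,
          trajs A B g x0 (extSeq (N+1) (Fin.snoc ω i)) (N+1) (Fin.last (N+1))
          = A i *ᵥ (trajs A B g x0 (extSeq N ω) N (Fin.last N)) +
            B *ᵥ (g N (trajs A B g x0 (extSeq N ω) N)) := by
        intro i
        show (Fin.snoc (trajs A B g x0 (extSeq (N+1) (Fin.snoc ω i)) N)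
          (A (extSeq (N+1) (Fin.snoc ω i) N) *ᵥ
            (trajs A B g x0 (extSeq (N+1) (Fin.snoc ω i)) N (Fin.last N)) +
           B *ᵥ g N (trajs A B g x0 (extSeq (N+1) (Fin.snoc ω i)) N)) : Fin (N+2) → Fin n → ℝ)
            (Fin.last (N+1))
          = _
        rw [Fin.snoc_last, extSeq_snoc_last, htrajs i N le_rfl]
      have key := key_quad π hsum A B M R (Pm (N+1)) (Pm N) hPsym hSpd
        (hrec N (Nat.lt_succ_self N))
        (trajs A B g x0 (extSeq N ω) N (Fin.last N))
        (g N (trajs A B g x0 (extSeq N ω) N))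
      calc ∑ i, π i * (stageSum A B M R g x0 (N+1) (extSeq (N+1) (Fin.snoc ω i)) +
              (trajs A B g x0 (extSeq (N+1) (Fin.snoc ω i)) (N+1) (Fin.last (N+1))) ⬝ᵥ
                (Pm (N+1) *ᵥ (trajs A B g x0 (extSeq (N+1) (Fin.snoc ω i)) (N+1)
                  (Fin.last (N+1)))))
          = ∑ i, (π i * (stageSum A B M R g x0 N (extSeq N ω) +
              ((trajs A B g x0 (extSeq N ω) N (Fin.last N)) ⬝ᵥ
                (M *ᵥ (trajs A B g x0 (extSeq N ω) N (Fin.last N))) +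
               (g N (trajs A B g x0 (extSeq N ω) N)) ⬝ᵥ
                (R *ᵥ (g N (trajs A B g x0 (extSeq N ω) N)))))
            + π i * ((A i *ᵥ (trajs A B g x0 (extSeq N ω) N (Fin.last N)) +
                B *ᵥ (g N (trajs A B g x0 (extSeq N ω) N))) ⬝ᵥ
                (Pm (N+1) *ᵥ (A i *ᵥ (trajs A B g x0 (extSeq N ω) N (Fin.last N)) +
                  B *ᵥ (g N (trajs A B g x0 (extSeq N ω) N)))))) := by
            apply Finset.sum_congr rfl
            intro i _
            rw [hstage i, hX i]
            ring
        _ = (∑ i, π i) * (stageSum A B M R g x0 N (extSeq N ω) +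
              ((trajs A B g x0 (extSeq N ω) N (Fin.last N)) ⬝ᵥ
                (M *ᵥ (trajs A B g x0 (extSeq N ω) N (Fin.last N))) +
               (g N (trajs A B g x0 (extSeq N ω) N)) ⬝ᵥ
                (R *ᵥ (g N (trajs A B g x0 (extSeq N ω) N)))))
            + ∑ i, π i * ((A i *ᵥ (trajs A B g x0 (extSeq N ω) N (Fin.last N)) +
                B *ᵥ (g N (trajs A B g x0 (extSeq N ω) N))) ⬝ᵥ
                (Pm (N+1) *ᵥ (A i *ᵥ (trajs A B g x0 (extSeq N ω) N (Fin.last N)) +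
                  B *ᵥ (g N (trajs A B g x0 (extSeq N ω) N))))) := by
            rw [Finset.sum_add_distrib, ← Finset.sum_mul]
        _ = stageSum A B M R g x0 N (extSeq N ω) +
            ((trajs A B g x0 (extSeq N ω) N (Fin.last N)) ⬝ᵥ
                (M *ᵥ (trajs A B g x0 (extSeq N ω) N (Fin.last N))) +
             (g N (trajs A B g x0 (extSeq N ω) N)) ⬝ᵥ
                (R *ᵥ (g N (trajs A B g x0 (extSeq N ω) N))) +
             ∑ i, π i * ((A i *ᵥ (trajs A B g x0 (extSeq N ω) N (Fin.last N)) +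
                B *ᵥ (g N (trajs A B g x0 (extSeq N ω) N))) ⬝ᵥ
                (Pm (N+1) *ᵥ (A i *ᵥ (trajs A B g x0 (extSeq N ω) N (Fin.last N)) +
                  B *ᵥ (g N (trajs A B g x0 (extSeq N ω) N)))))) := by
            rw [hsum, one_mul]
            ring
        _ = stageSum A B M R g x0 N (extSeq N ω) +
            ((trajs A B g x0 (extSeq N ω) N (Fin.last N)) ⬝ᵥ
              (Pm N *ᵥ (trajs A B g x0 (extSeq N ω) N (Fin.last N))) +
             dterm A B R π Pm g x0 N (extSeq N ω)) := by
            rw [key]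
            unfold dterm
            rfl
        _ = stageSum A B M R g x0 N (extSeq N ω) +
            (trajs A B g x0 (extSeq N ω) N (Fin.last N)) ⬝ᵥ
              (Pm N *ᵥ (trajs A B g x0 (extSeq N ω) N (Fin.last N))) +
            dterm A B R π Pm g x0 N (extSeq N ω) := by ring
    rw [step1, IH hrecN hpsdN x0 g]
    have hmarg : ∀ k, k ≤ N →
        ∑ ω : Fin (N+1) → Fin q, (∏ j, π (ω j)) *
          dterm A B R π Pm g x0 k (extSeq (N+1) ω)
        = ∑ ω : Fin N → Fin q, (∏ j, π (ω j)) *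
          dterm A B R π Pm g x0 k (extSeq N ω) := by
      intro k hk
      exact marg π hsum N (dterm A B R π Pm g x0 k)
        (fun ω ω' h => dterm_congr A B R π Pm g x0 k ω ω'
          (fun j hj => h j (lt_of_lt_of_le hj hk)))
    rw [Finset.sum_range_succ, hmarg N le_rfl]
    have : ∀ k ∈ Finset.range N,
        ∑ ω : Fin (N+1) → Fin q, (∏ j, π (ω j)) *
          dterm A B R π Pm g x0 k (extSeq (N+1) ω)
        = ∑ ω : Fin N → Fin q, (∏ j, π (ω j)) *
          dterm A B R π Pm g x0 k (extSeq N ω) :=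
      fun k hk => hmarg k (le_of_lt (Finset.mem_range.mp hk))
    rw [Finset.sum_congr rfl this]
    ring

/-- Finite-horizon LQR for the dtMJLS with unmeasurable i.i.d. mode: the optimal
expected cost from `x(0) = x₀` over all causal state-feedback policies is
`x₀' P(0) x₀`, where `P(·)` satisfies the backward Riccati-type recursion, and the
linear feedback `u(k) = K(k) x(k)`, `K(k) = −(R+B'P(k+1)B)⁻¹ B'P(k+1)Ā`, is optimal. -/
theorem stmt8 {n m q : ℕ} [NeZero q]
    (π : Fin q → ℝ) (hπ : ∀ i, 0 ≤ π i) (hsum : ∑ i, π i = 1)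
    (A : Fin q → Matrix (Fin n) (Fin n) ℝ) (B : Matrix (Fin n) (Fin m) ℝ)
    (M Q : Matrix (Fin n) (Fin n) ℝ) (R : Matrix (Fin m) (Fin m) ℝ)
    (hM : M.PosSemidef) (hQ : Q.PosSemidef) (hR : R.PosDef)
    (N : ℕ) (x0 : Fin n → ℝ)
    (Pm : ℕ → Matrix (Fin n) (Fin n) ℝ) (hPN : Pm N = Q)
    (hrec : ∀ k, k < N → Pm k = M + (∑ i, π i • ((A i)ᵀ * Pm (k+1) * A i)) -
      (∑ i, π i • A i)ᵀ * Pm (k+1) * B * (R + Bᵀ * Pm (k+1) * B)⁻¹ *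
        Bᵀ * Pm (k+1) * (∑ i, π i • A i))
    (K : ℕ → Matrix (Fin m) (Fin n) ℝ)
    (hK : ∀ k, K k = -((R + Bᵀ * Pm (k+1) * B)⁻¹ * Bᵀ * Pm (k+1) * (∑ i, π i • A i))) :
    expCost A B M Q R π N x0 (fun k h => K k *ᵥ h (Fin.last k)) = x0 ⬝ᵥ (Pm 0 *ᵥ x0) ∧
    ∀ g : (k : ℕ) → (Fin (k + 1) → (Fin n → ℝ)) → (Fin m → ℝ),
      x0 ⬝ᵥ (Pm 0 *ᵥ x0) ≤ expCost A B M Q R π N x0 g := by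
  have hpsdAux : ∀ d k, k + d = N → (Pm k).PosSemidef := by
    intro d
    induction d with
    | zero =>
      intro k hk
      have : k = N := by omega
      rw [this, hPN]; exact hQ
    | succ d ih =>
      intro k hk
      exact psd_step π hπ hsum A B M R hM hR (Pm (k+1)) (Pm k)
        (ih (k+1) (by omega)) (hrec k (by omega))
  have hpsd : ∀ k, k ≤ N → (Pm k).PosSemidef := fun k hk => hpsdAux (N - k) k (by omega)
  have main := mainLemma π hπ hsum A B M R hR Pm N hrec hpsd x0
  rw [← hPN]
  constructor
  · rw [main (fun k h => K k *ᵥ h (Fin.last k))]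
    have hz : ∀ k ∈ Finset.range N, ∑ ω : Fin N → Fin q, (∏ j, π (ω j)) *
        dterm A B R π Pm (fun k h => K k *ᵥ h (Fin.last k)) x0 k (extSeq N ω) = 0 := by
      intro k _
      apply Finset.sum_eq_zero
      intro ω _
      unfold dterm
      simp [hK k, Matrix.neg_mulVec]
    rw [Finset.sum_congr rfl hz, Finset.sum_const_zero, add_zero]
  · intro g
    rw [main g]
    have h0 : 0 ≤ ∑ k ∈ Finset.range N, ∑ ω : Fin N → Fin q, (∏ j, π (ω j)) *
        dterm A B R π Pm g x0 k (extSeq N ω) := by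
      apply Finset.sum_nonneg
      intro k hk
      apply Finset.sum_nonneg
      intro ω _
      apply mul_nonneg (Finset.prod_nonneg fun j _ => hπ _)
      unfold dterm
      exact psd_nonneg (Spd hR (hpsd (k+1) (Finset.mem_range.mp hk))).posSemidef _
    linarith
end

section
/- In the dynamic programming step, the value function remains quadratic: if the cost-to-go at time k+1 is V_{k+1}(x) = x'P x with P symmetric PSD, and at time k the controller may additionally choose a discrete input a ∈ {1,…,p} selecting the input matrix B_a, then the optimal cost-to-go at time k is V_k(x) = min_{a ∈ {1,…,p}} x' P_a x, where P_a = M + Σ_i π_i A_i'PA_i − Ā'PB_a(R + B_a'PB_a)⁻¹B_a'PĀ; i.e., V_k is a pointwise minimum of finitely many PSD quadratic forms. -/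
open Matrix

lemma sum_smul_dot {k q : ℕ} (c : Fin q → ℝ) (y : Fin q → Fin k → ℝ) (z : Fin k → ℝ) :
    ∑ i, c i * (y i ⬝ᵥ z) = (∑ i, c i • y i) ⬝ᵥ z := by
  simp only [dotProduct, Finset.sum_apply, Pi.smul_apply, smul_eq_mul, Finset.mul_sum,
    Finset.sum_mul]
  rw [Finset.sum_comm]
  refine Finset.sum_congr rfl fun j _ => Finset.sum_congr rfl fun i _ => by ring

lemma sum_smul_mulVec {k l q : ℕ} (c : Fin q → ℝ) (N : Fin q → Matrix (Fin k) (Fin l) ℝ)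
    (x : Fin l → ℝ) : (∑ i, c i • N i) *ᵥ x = ∑ i, c i • (N i *ᵥ x) := by
  ext j
  simp only [mulVec, dotProduct, Finset.sum_apply, Matrix.sum_apply, Matrix.smul_apply,
    Pi.smul_apply, smul_eq_mul, Finset.sum_mul, Finset.mul_sum]
  rw [Finset.sum_comm]
  refine Finset.sum_congr rfl fun j' _ => Finset.sum_congr rfl fun i _ => by ring

lemma pairing {k l r : ℕ} (N : Matrix (Fin k) (Fin l) ℝ) (M : Matrix (Fin k) (Fin r) ℝ)
    (y : Fin l → ℝ) (z : Fin r → ℝ) :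
    (N *ᵥ y) ⬝ᵥ (M *ᵥ z) = y ⬝ᵥ ((Nᵀ * M) *ᵥ z) := by
  rw [← mulVec_mulVec, dotProduct_mulVec (w := M *ᵥ z), ← mulVec_transpose, transpose_transpose]

lemma complete_square {m : ℕ} (S : Matrix (Fin m) (Fin m) ℝ) (hS : Sᵀ = S)
    (h1 : S * S⁻¹ = 1) (k u : Fin m → ℝ) :
    u ⬝ᵥ (S *ᵥ u) + 2 * (u ⬝ᵥ k) =
      (u + S⁻¹ *ᵥ k) ⬝ᵥ (S *ᵥ (u + S⁻¹ *ᵥ k)) - k ⬝ᵥ (S⁻¹ *ᵥ k) := by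
  have e1 : S *ᵥ (S⁻¹ *ᵥ k) = k := by rw [mulVec_mulVec, h1, one_mulVec]
  have e2 : (S⁻¹ *ᵥ k) ⬝ᵥ (S *ᵥ u) = u ⬝ᵥ k := by
    rw [dotProduct_mulVec, ← mulVec_transpose, hS, mulVec_mulVec, h1, one_mulVec,
      dotProduct_comm]
  rw [mulVec_add, e1, dotProduct_add, add_dotProduct, add_dotProduct, e2,
    dotProduct_comm (S⁻¹ *ᵥ k) k]
  ring

/-- cost identity for a fixed discrete input -/
lemma cost_identity {n m q : ℕ} (π : Fin q → ℝ) (hsum : ∑ i, π i = 1)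
    (A : Fin q → Matrix (Fin n) (Fin n) ℝ) (B : Matrix (Fin n) (Fin m) ℝ)
    (M P : Matrix (Fin n) (Fin n) ℝ) (R : Matrix (Fin m) (Fin m) ℝ)
    (hPsym : Pᵀ = P)
    (hSsym : (R + Bᵀ * P * B)ᵀ = R + Bᵀ * P * B)
    (hSinv : (R + Bᵀ * P * B) * (R + Bᵀ * P * B)⁻¹ = 1)
    (x : Fin n → ℝ) (u : Fin m → ℝ) :
    x ⬝ᵥ (M *ᵥ x) + u ⬝ᵥ (R *ᵥ u) +
        ∑ i, π i * ((A i *ᵥ x + B *ᵥ u) ⬝ᵥ (P *ᵥ (A i *ᵥ x + B *ᵥ u)))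
      = x ⬝ᵥ ((M + (∑ i, π i • ((A i)ᵀ * P * A i)) -
          (∑ i, π i • A i)ᵀ * P * B * (R + Bᵀ * P * B)⁻¹ * Bᵀ * P * (∑ i, π i • A i)) *ᵥ x)
        + (u + (R + Bᵀ * P * B)⁻¹ *ᵥ ((Bᵀ * P * (∑ i, π i • A i)) *ᵥ x)) ⬝ᵥ
            ((R + Bᵀ * P * B) *ᵥ
              (u + (R + Bᵀ * P * B)⁻¹ *ᵥ ((Bᵀ * P * (∑ i, π i • A i)) *ᵥ x))) := by
  set Ab : Matrix (Fin n) (Fin n) ℝ := ∑ i, π i • A i with hAb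
  set S : Matrix (Fin m) (Fin m) ℝ := R + Bᵀ * P * B with hS
  set K : Matrix (Fin m) (Fin n) ℝ := Bᵀ * P * Ab with hK
  have hpair : ∀ y z : Fin n → ℝ, y ⬝ᵥ (P *ᵥ z) = z ⬝ᵥ (P *ᵥ y) := by
    intro y z
    rw [dotProduct_mulVec, ← mulVec_transpose, hPsym, dotProduct_comm]
  have hAbv : Ab *ᵥ x = ∑ i, π i • (A i *ᵥ x) := sum_smul_mulVec π A x
  have hexp : ∀ i, (A i *ᵥ x + B *ᵥ u) ⬝ᵥ (P *ᵥ (A i *ᵥ x + B *ᵥ u)) =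
      (A i *ᵥ x) ⬝ᵥ (P *ᵥ (A i *ᵥ x)) + (A i *ᵥ x) ⬝ᵥ (P *ᵥ (B *ᵥ u)) +
      (B *ᵥ u) ⬝ᵥ (P *ᵥ (A i *ᵥ x)) + (B *ᵥ u) ⬝ᵥ (P *ᵥ (B *ᵥ u)) := by
    intro i
    rw [mulVec_add, dotProduct_add, add_dotProduct, add_dotProduct]
    ring
  have hsum1 : ∑ i, π i * ((A i *ᵥ x) ⬝ᵥ (P *ᵥ (B *ᵥ u))) = u ⬝ᵥ (K *ᵥ x) := by
    rw [sum_smul_dot, ← hAbv, hpair, pairing, mulVec_mulVec, hK]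
  have hsum2 : ∑ i, π i * ((B *ᵥ u) ⬝ᵥ (P *ᵥ (A i *ᵥ x))) = u ⬝ᵥ (K *ᵥ x) := by
    have h : ∀ i, (B *ᵥ u) ⬝ᵥ (P *ᵥ (A i *ᵥ x)) = (A i *ᵥ x) ⬝ᵥ (P *ᵥ (B *ᵥ u)) := fun i =>
      (hpair _ _).symm
    simp only [h]
    exact hsum1
  have hsum3 : ∑ i, π i * ((B *ᵥ u) ⬝ᵥ (P *ᵥ (B *ᵥ u))) = u ⬝ᵥ ((Bᵀ * P * B) *ᵥ u) := by
    rw [← Finset.sum_mul, hsum, one_mul, pairing, mulVec_mulVec]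
  have hsum0 : ∑ i, π i * ((A i *ᵥ x) ⬝ᵥ (P *ᵥ (A i *ᵥ x))) =
      x ⬝ᵥ ((∑ i, π i • ((A i)ᵀ * P * A i)) *ᵥ x) := by
    have h1 : ∀ i : Fin q, (A i *ᵥ x) ⬝ᵥ (P *ᵥ (A i *ᵥ x)) =
        x ⬝ᵥ (((A i)ᵀ * P * A i) *ᵥ x) := by
      intro i
      rw [pairing, mulVec_mulVec, Matrix.mul_assoc]
    simp only [h1]
    rw [sum_smul_mulVec, dotProduct_comm, ← sum_smul_dot]
    refine Finset.sum_congr rfl fun i _ => ?_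
    rw [dotProduct_comm]
  have hT : x ⬝ᵥ ((Abᵀ * P * B * S⁻¹ * Bᵀ * P * Ab) *ᵥ x) =
      (K *ᵥ x) ⬝ᵥ (S⁻¹ *ᵥ (K *ᵥ x)) := by
    have hKT : Abᵀ * P * B * S⁻¹ * Bᵀ * P * Ab = Kᵀ * (S⁻¹ * K) := by
      simp only [hK, transpose_mul, transpose_transpose, hPsym, Matrix.mul_assoc]
    rw [hKT, ← mulVec_mulVec, dotProduct_mulVec, vecMul_transpose,
      ← mulVec_mulVec x S⁻¹ K, hK, ← mulVec_mulVec]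
  have hcs := complete_square S hSsym hSinv (K *ᵥ x) u
  have hSu : u ⬝ᵥ (S *ᵥ u) = u ⬝ᵥ (R *ᵥ u) + u ⬝ᵥ ((Bᵀ * P * B) *ᵥ u) := by
    rw [hS, add_mulVec, dotProduct_add]
  simp only [hexp, mul_add, Finset.sum_add_distrib]
  rw [hsum0, hsum1, hsum2, hsum3, sub_mulVec, add_mulVec, dotProduct_sub, dotProduct_add, hT]
  rw [hSu] at hcs
  linarith

/-- With an additional discrete input `a` selecting `B_a`, the optimal cost-to-go
remains a pointwise minimum of finitely many PSD quadratic forms: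
`min_{a,u} [x'Mx + u'Ru + E[(A_σ x + B_a u)'P(A_σ x + B_a u)]] = min_a x'P_a x`
where `P_a = M + Σ_i π_i A_i'PA_i − Ā'PB_a(R + B_a'PB_a)⁻¹B_a'PĀ`. -/
theorem stmt9 {n m q p : ℕ} [NeZero p]
    (π : Fin q → ℝ) (hπ : ∀ i, 0 ≤ π i) (hsum : ∑ i, π i = 1)
    (A : Fin q → Matrix (Fin n) (Fin n) ℝ) (Bm : Fin p → Matrix (Fin n) (Fin m) ℝ)
    (M P : Matrix (Fin n) (Fin n) ℝ) (R : Matrix (Fin m) (Fin m) ℝ)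
    (hM : M.PosSemidef) (hP : P.PosSemidef) (hR : R.PosDef)
    (Pa : Fin p → Matrix (Fin n) (Fin n) ℝ)
    (hPa : ∀ a, Pa a = M + (∑ i, π i • ((A i)ᵀ * P * A i)) -
      (∑ i, π i • A i)ᵀ * P * Bm a * (R + (Bm a)ᵀ * P * Bm a)⁻¹ *
        (Bm a)ᵀ * P * (∑ i, π i • A i))
    (x : Fin n → ℝ) :
    IsLeast {c : ℝ | ∃ (a : Fin p) (u : Fin m → ℝ),
        c = x ⬝ᵥ (M *ᵥ x) + u ⬝ᵥ (R *ᵥ u) +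
          ∑ i, π i * ((A i *ᵥ x + Bm a *ᵥ u) ⬝ᵥ (P *ᵥ (A i *ᵥ x + Bm a *ᵥ u)))}
      (Finset.univ.inf' Finset.univ_nonempty (fun a => x ⬝ᵥ (Pa a *ᵥ x))) := by
  have hPsym : Pᵀ = P := hP.1
  have hSpd : ∀ a : Fin p, (R + (Bm a)ᵀ * P * (Bm a)).PosDef := by
    intro a
    refine hR.add_posSemidef ?_
    have := hP.conjTranspose_mul_mul_same (Bm a)
    simpa using this
  have hSsym : ∀ a : Fin p, (R + (Bm a)ᵀ * P * (Bm a))ᵀ = R + (Bm a)ᵀ * P * (Bm a) :=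
    fun a => (hSpd a).1
  have hSinv : ∀ a : Fin p,
      (R + (Bm a)ᵀ * P * (Bm a)) * (R + (Bm a)ᵀ * P * (Bm a))⁻¹ = 1 := fun a =>
    mul_nonsing_inv _ ((hSpd a).det_pos.ne').isUnit
  have key : ∀ (a : Fin p) (u : Fin m → ℝ),
      x ⬝ᵥ (M *ᵥ x) + u ⬝ᵥ (R *ᵥ u) +
        ∑ i, π i * ((A i *ᵥ x + Bm a *ᵥ u) ⬝ᵥ (P *ᵥ (A i *ᵥ x + Bm a *ᵥ u)))
      = x ⬝ᵥ (Pa a *ᵥ x) +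
        (u + (R + (Bm a)ᵀ * P * Bm a)⁻¹ *ᵥ (((Bm a)ᵀ * P * (∑ i, π i • A i)) *ᵥ x)) ⬝ᵥ
          ((R + (Bm a)ᵀ * P * Bm a) *ᵥ
            (u + (R + (Bm a)ᵀ * P * Bm a)⁻¹ *ᵥ
              (((Bm a)ᵀ * P * (∑ i, π i • A i)) *ᵥ x))) := by
    intro a u
    rw [cost_identity π hsum A (Bm a) M P R hPsym (hSsym a) (hSinv a) x u, hPa a]
  constructor
  · obtain ⟨a, -, ha⟩ := Finset.exists_mem_eq_inf' Finset.univ_nonempty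
      (fun a => x ⬝ᵥ (Pa a *ᵥ x))
    refine ⟨a, -((R + (Bm a)ᵀ * P * Bm a)⁻¹ *ᵥ (((Bm a)ᵀ * P * (∑ i, π i • A i)) *ᵥ x)), ?_⟩
    rw [key a, ha]
    simp
  · rintro c ⟨a, u, rfl⟩
    rw [key a u]
    have h1 : Finset.univ.inf' Finset.univ_nonempty (fun a => x ⬝ᵥ (Pa a *ᵥ x)) ≤
        x ⬝ᵥ (Pa a *ᵥ x) := Finset.inf'_le _ (Finset.mem_univ a)
    have h2 : 0 ≤ (u + (R + (Bm a)ᵀ * P * Bm a)⁻¹ *ᵥ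
          (((Bm a)ᵀ * P * (∑ i, π i • A i)) *ᵥ x)) ⬝ᵥ
        ((R + (Bm a)ᵀ * P * Bm a) *ᵥ (u + (R + (Bm a)ᵀ * P * Bm a)⁻¹ *ᵥ
          (((Bm a)ᵀ * P * (∑ i, π i • A i)) *ᵥ x))) := by
      have := (hSpd a).posSemidef.dotProduct_mulVec_nonneg (u + (R + (Bm a)ᵀ * P * Bm a)⁻¹ *ᵥ
          (((Bm a)ᵀ * P * (∑ i, π i • A i)) *ᵥ x))
      simpa using this
    linarith
end
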